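/- For x, y in the open unit disk, (1/2)[log((|x−y| + |xȳ−1|)/(1−|y|²)) + log((|y−x| + |yx̄−1|)/(1−|x|²))] = (1/2) log((|1−xȳ| + |x−y|)/(|1−xȳ| − |x−y|)); i.e., the mean-value symmetrization of the Apollonian weak metric of the unit disk equals the Poincaré metric of the disk. -/

import Mathlib

open Complex

/-- The mean-value symmetrization of the Apollonian weak metric of the unit disk
equals the Poincaré metric of the disk. -/
theorem apollonian_disk_symmetrization (x y : ℂ) (hx : ‖x‖ < 1)
    (hy : ‖y‖ < 1) :
    (1 / 2) * (Real.log ((‖x - y‖ + ‖x * (starRingEnd ℂ) y - 1‖) /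
          (1 - ‖y‖ ^ 2)) +
        Real.log ((‖y - x‖ + ‖y * (starRingEnd ℂ) x - 1‖) /
          (1 - ‖x‖ ^ 2))) =
      (1 / 2) * Real.log ((‖1 - x * (starRingEnd ℂ) y‖ + ‖x - y‖) /
        (‖1 - x * (starRingEnd ℂ) y‖ - ‖x - y‖)) := by
  set a := ‖x - y‖ with ha
  set b := ‖1 - x * (starRingEnd ℂ) y‖ with hb
  have h1 : ‖x * (starRingEnd ℂ) y - 1‖ = b := by
    rw [hb, ← norm_neg (x * (starRingEnd ℂ) y - 1)]; ring_nf
  have h2 : ‖y - x‖ = a := by rw [ha, norm_sub_rev]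
  have h3 : ‖y * (starRingEnd ℂ) x - 1‖ = b := by
    have : y * (starRingEnd ℂ) x - 1 = (starRingEnd ℂ) (x * (starRingEnd ℂ) y - 1) := by
      simp [mul_comm]
    rw [this, Complex.norm_conj, h1]
  have hx2 : (0:ℝ) < 1 - ‖x‖ ^ 2 := by nlinarith [norm_nonneg x]
  have hy2 : (0:ℝ) < 1 - ‖y‖ ^ 2 := by nlinarith [norm_nonneg y]
  have key : b ^ 2 - a ^ 2 = (1 - ‖x‖ ^ 2) * (1 - ‖y‖ ^ 2) := by
    rw [ha, hb, Complex.sq_norm, Complex.sq_norm, Complex.sq_norm, Complex.sq_norm]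
    simp only [Complex.normSq_apply, Complex.mul_re, Complex.mul_im, Complex.sub_re,
      Complex.sub_im, Complex.one_re, Complex.one_im, Complex.conj_re, Complex.conj_im]
    ring
  have ha0 : 0 ≤ a := norm_nonneg _
  have hab : a < b := by
    have hb' : 0 ≤ b := norm_nonneg _
    nlinarith [mul_pos hx2 hy2]
  have hb0 : 0 < b := lt_of_le_of_lt ha0 hab
  rw [h1, h2, h3]
  have hsum : (0:ℝ) < a + b := by linarith
  have hsum' : (0:ℝ) < b + a := by linarith
  have hdiff : (0:ℝ) < b - a := by linarith
  rw [Real.log_div hsum.ne' hy2.ne', Real.log_div hsum.ne' hx2.ne',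
    Real.log_div hsum'.ne' hdiff.ne']
  have : Real.log (1 - ‖x‖ ^ 2) + Real.log (1 - ‖y‖ ^ 2)
      = Real.log (a + b) + Real.log (b - a) := by
    rw [← Real.log_mul hx2.ne' hy2.ne', ← key, ← Real.log_mul hsum.ne' hdiff.ne']
    ring_nf
  rw [add_comm b a]
  linarith
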